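/- Let q ≥ 2 be a prime power, n ≥ 3 odd, m = (q^n+1)/(q+1), S ⊆ ℕ the additive submonoid generated by q³, m·q, q^n+1, and g = (q−1)(q^{n+1}+q^n−q²)/2. Enumerate S = {ρ₁ = 0 < ρ₂ < ρ₃ < …}. If ℓ is an integer with (3/2)(q−1)(q^{n+1} + q^n/3 − q² − 2/3) − 2 < ℓ ≤ (3/2)(q−1)(q^{n+1} + q^n − q²) − 2, then min{ ν(y) : y ∈ S, y ≥ ρ_{ℓ+1} } = min{ z ∈ S : z ≥ ℓ + 1 − g }, where ν(y) is the number of ordered pairs (a,b) ∈ S × S with a + b = y. -/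

import Mathlib

open scoped Classical
open Finset

set_option maxHeartbeats 1600000

namespace Stmt17

variable {q n m : ℕ} {S : AddSubmonoid ℕ}

lemma mem_of_rep (hS : S = AddSubmonoid.closure {q ^ 3, m * q, q ^ n + 1})
    (hm : m * (q + 1) = q ^ n + 1) (c d e : ℕ) :
    c * q ^ 3 + d * (m * q) + e * (m * q + m) ∈ S := by
  subst hS
  have h1 : (q^3 : ℕ) ∈ AddSubmonoid.closure ({q ^ 3, m * q, q ^ n + 1} : Set ℕ) :=
    AddSubmonoid.subset_closure (by simp)
  have h2 : (m*q : ℕ) ∈ AddSubmonoid.closure ({q ^ 3, m * q, q ^ n + 1} : Set ℕ) :=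
    AddSubmonoid.subset_closure (by simp)
  have h3 : (m*q + m : ℕ) ∈ AddSubmonoid.closure ({q ^ 3, m * q, q ^ n + 1} : Set ℕ) := by
    have h : m*q+m = q^n+1 := by rw [← hm]; ring
    rw [h]
    exact AddSubmonoid.subset_closure (by simp)
  have hc : ∀ (k x : ℕ), x ∈ AddSubmonoid.closure ({q ^ 3, m * q, q ^ n + 1} : Set ℕ) →
      k * x ∈ AddSubmonoid.closure ({q ^ 3, m * q, q ^ n + 1} : Set ℕ) := by
    intro k x hx
    simpa [nsmul_eq_mul] using AddSubmonoid.nsmul_mem _ hx k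
  exact AddSubmonoid.add_mem _ (AddSubmonoid.add_mem _ (hc c _ h1) (hc d _ h2)) (hc e _ h3)

lemma rep_of_mem (hS : S = AddSubmonoid.closure {q ^ 3, m * q, q ^ n + 1})
    (hm : m * (q + 1) = q ^ n + 1) {x : ℕ} (hx : x ∈ S) :
    ∃ c d e, x = c * q ^ 3 + d * (m * q) + e * (m * q + m) := by
  subst hS
  induction hx using AddSubmonoid.closure_induction with
  | mem y hy =>
      rcases hy with h | h | h
      · exact ⟨1, 0, 0, by simp [h]⟩
      · exact ⟨0, 1, 0, by simp [h]⟩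
      · refine ⟨0, 0, 1, ?_⟩
        simp only [Set.mem_singleton_iff] at h
        have : m*q+m = q^n+1 := by rw [← hm]; ring
        simp [h, this]
  | zero => exact ⟨0, 0, 0, by simp⟩
  | add a b _ _ ha hb =>
      obtain ⟨c1, d1, e1, rfl⟩ := ha
      obtain ⟨c2, d2, e2, rfl⟩ := hb
      exact ⟨c1+c2, d1+d2, e1+e2, by ring⟩

lemma reduce (hq2 : 2 ≤ q) (c d e : ℕ) :
    ∃ c' d' e', d' < q^2 ∧ e' < q ∧
      c' * q ^ 3 + d' * (m * q) + e' * (m * q + m)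
        = c * q ^ 3 + d * (m * q) + e * (m * q + m) := by
  have hq0 : 0 < q := by omega
  set A := d + (q+1) * (e / q) with hA
  refine ⟨c + m * (A / q^2), A % q^2, e % q, Nat.mod_lt _ (by positivity), Nat.mod_lt _ hq0, ?_⟩
  have h1 : q^2 * (A / q^2) + A % q^2 = A := Nat.div_add_mod A (q^2)
  have h2 : q * (e / q) + e % q = e := Nat.div_add_mod e q
  set a2 := A / q^2
  set r2 := A % q^2
  set a3 := e / q
  set r3 := e % q
  calc (c + m * a2) * q ^ 3 + r2 * (m * q) + r3 * (m * q + m)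
      = c * q^3 + (q^2 * a2 + r2) * (m*q) + r3 * (m*q+m) := by ring
    _ = c * q^3 + (d + (q+1) * a3) * (m*q) + r3 * (m*q+m) := by rw [h1]
    _ = c * q^3 + d * (m*q) + ((q * a3 + r3) * (m*q+m)) := by ring
    _ = c * q^3 + d * (m*q) + e * (m*q+m) := by rw [h2]

lemma mem_iff (hS : S = AddSubmonoid.closure {q ^ 3, m * q, q ^ n + 1})
    (hm : m * (q + 1) = q ^ n + 1) (hq2 : 2 ≤ q) (x : ℕ) :
    x ∈ S ↔ ∃ c d e, d < q^2 ∧ e < q ∧ x = c * q ^ 3 + d * (m * q) + e * (m * q + m) := by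
  constructor
  · intro hx
    obtain ⟨c, d, e, rfl⟩ := rep_of_mem hS hm hx
    obtain ⟨c', d', e', h1, h2, h3⟩ := reduce (m := m) hq2 c d e
    exact ⟨c', d', e', h1, h2, h3.symm⟩
  · rintro ⟨c, d, e, -, -, rfl⟩
    exact mem_of_rep hS hm c d e

variable {q n m : ℕ} {S : AddSubmonoid ℕ}

lemma exist_res (hm : m * (q + 1) = q ^ n + 1) (hn : 3 ≤ n) (hq2 : 2 ≤ q) (x : ℕ) :
    ∃ d e, d < q^2 ∧ e < q ∧ x ≡ d*(m*q) + e*(m*q+m) [MOD q^3] := by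
  have hq0 : 0 < q := by omega
  have hmq3 : m*(q+1) ≡ 1 [MOD q^3] := by
    have hqn : q^n = q^3 * q^(n-3) := by rw [← pow_add]; congr 1; omega
    show (m*(q+1)) % q^3 = 1 % q^3
    rw [hm, hqn, mul_comm (q^3), add_comm, Nat.add_mul_mod_self_right]
  set W := ((q+1)*x) % q^3 with hW
  set e := W % q with he
  have heq : e < q := Nat.mod_lt _ hq0
  have heW : e ≤ W := Nat.mod_le _ _
  have hq1q3 : q*(q+1) ≤ q^3 := by
    have h1 : 2*q ≤ q*q := Nat.mul_le_mul_right q hq2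
    have h2 : q*(q+1) ≤ q*(q*q) := Nat.mul_le_mul_left q (by omega)
    have h3 : q^3 = q*(q*q) := by ring
    omega
  have heb : e*(q+1) ≤ q^3 := by
    have h1 : e*(q+1) ≤ q*(q+1) := Nat.mul_le_mul_right _ (by omega)
    omega
  set D := W + q^3 - e*(q+1) with hD
  have hqD : q ∣ D := by
    have h2 : e*q ≤ q^3 := by
      have := Nat.mul_le_mul_right q (show e ≤ q*(q+1) by nlinarith [Nat.le_of_lt heq])
      nlinarith [Nat.mul_le_mul_right q (Nat.le_of_lt heq)]
    have h1 : D = (W - e) + (q^3 - e*q) := by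
      have h3 : e * (q+1) = e*q + e := by ring
      omega
    rw [h1]
    refine Nat.dvd_add ?_ ?_
    · simpa [he] using Nat.dvd_sub_mod (n := q) W
    · exact ⟨q^2 - e, by rw [Nat.mul_sub]; ring_nf⟩
  set d := (D / q) % q^2 with hd
  have hdq : d < q^2 := Nat.mod_lt _ (by positivity)
  refine ⟨d, e, hdq, heq, ?_⟩
  have k1 : d * q ≡ (D/q) * q [MOD q^3] := by
    have h := Nat.ModEq.mul_right' q (Nat.mod_modEq (D/q) (q^2))
    rwa [show q^2*q = q^3 by ring] at h
  have k2 : (D/q)*q = D := Nat.div_mul_cancel hqD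
  have k3 : d*q + e*(q+1) ≡ W [MOD q^3] := by
    calc d*q + e*(q+1) ≡ (D/q)*q + e*(q+1) [MOD q^3] := k1.add_right _
      _ = W + q^3 := by rw [k2]; omega
      _ ≡ W [MOD q^3] := by show _ % _ = _ % _ ; exact Nat.add_mod_right _ _
  have k4 : W ≡ (q+1)*x [MOD q^3] := Nat.mod_modEq _ _
  have A : (q+1)*(d*(m*q)+e*(m*q+m)) ≡ d*q + e*(q+1) [MOD q^3] := by
    have h := (hmq3.mul_left (d*q)).add (hmq3.mul_left (e*(q+1)))
    calc (q+1)*(d*(m*q)+e*(m*q+m))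
        = d*q*(m*(q+1)) + e*(q+1)*(m*(q+1)) := by ring
      _ ≡ d*q*1 + e*(q+1)*1 [MOD q^3] := h
      _ = d*q + e*(q+1) := by ring
  have B : (q+1)*(d*(m*q)+e*(m*q+m)) ≡ (q+1)*x [MOD q^3] := A.trans (k3.trans k4)
  have hco : Nat.Coprime (q^3) (q+1) :=
    ((Nat.coprime_self_add_right.mpr (Nat.coprime_one_right q))).pow_left 3
  exact Nat.ModEq.cancel_left_of_coprime hco B.symm

set_option maxHeartbeats 1000000 in
lemma sym_aux (hm : m * (q + 1) = q ^ n + 1) (hn : 3 ≤ n) (hq2 : 2 ≤ q)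
    {c c' d d' e e' : ℕ} (hd : d < q^2) (he : e < q) (hd' : d' < q^2) (he' : e' < q)
    (heq : (c+c'+1)*q^3 + (d+d')*(m*q) + (e+e')*(m*q+m)
         = (q^2-1)*(m*q) + (q-1)*(m*q+m)) : False := by
  have h1q : 1 ≤ q := by omega
  have h1q2 : 1 ≤ q^2 := Nat.one_le_pow 2 q (by omega)
  zify [h1q, h1q2] at heq
  have hQ2 : (2:ℤ) ≤ (q:ℤ) := by exact_mod_cast hq2
  have hmz : (m:ℤ) * ((q:ℤ) + 1) = (q:ℤ)^n + 1 := by exact_mod_cast hm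
  have hQn : (q:ℤ)^n = (q:ℤ)*(q:ℤ)^(n-1) := by
    rw [← pow_succ']; congr 1; omega
  have copQM : IsCoprime (q:ℤ) (m:ℤ) :=
    ⟨-((q:ℤ)^(n-1) - (m:ℤ)), 1, by linear_combination hmz + hQn⟩
  have copQ1 : IsCoprime (q:ℤ) ((q:ℤ)+1) := ⟨-1, 1, by ring⟩
  have hdz : (d:ℤ) < (q:ℤ)^2 := by exact_mod_cast hd
  have hez : (e:ℤ) < (q:ℤ) := by exact_mod_cast he
  have hdz' : (d':ℤ) < (q:ℤ)^2 := by exact_mod_cast hd'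
  have hez' : (e':ℤ) < (q:ℤ) := by exact_mod_cast he'
  have he0 : (0:ℤ) ≤ (e:ℤ) := Int.natCast_nonneg e
  have he0' : (0:ℤ) ≤ (e':ℤ) := Int.natCast_nonneg e'
  have hd0 : (0:ℤ) ≤ (d:ℤ) := Int.natCast_nonneg d
  have hd0' : (0:ℤ) ≤ (d':ℤ) := Int.natCast_nonneg d'
  have key : (((e:ℤ)+(e':ℤ)) - ((q:ℤ)-1))*((m:ℤ)*((q:ℤ)+1))
      = (q:ℤ) * (((q:ℤ)^2-1)*(m:ℤ) - ((c:ℤ)+(c':ℤ)+1)*(q:ℤ)^2 - ((d:ℤ)+(d':ℤ))*(m:ℤ)) := by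
    linear_combination heq
  have hdvd : (q:ℤ) ∣ (((e:ℤ)+(e':ℤ)) - ((q:ℤ)-1)) := by
    have h : (q:ℤ) ∣ (((e:ℤ)+(e':ℤ)) - ((q:ℤ)-1))*((m:ℤ)*((q:ℤ)+1)) := Dvd.intro _ key.symm
    exact (copQM.mul_right copQ1).dvd_of_dvd_mul_right h
  have hE : ((e:ℤ)+(e':ℤ)) - ((q:ℤ)-1) = 0 := by
    refine Int.eq_zero_of_abs_lt_dvd hdvd ?_
    rw [abs_lt]; constructor <;> linarith
  have key2 : (q:ℤ) * (((((d:ℤ)+(d':ℤ))) - ((q:ℤ)^2-1)) * (m:ℤ) + ((c:ℤ)+(c':ℤ)+1)*(q:ℤ)^2) = 0 := by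
    linear_combination heq - ((m:ℤ)*((q:ℤ)+1))*hE
  have hQ0 : (q:ℤ) ≠ 0 := by linarith
  have key3 : ((((d:ℤ)+(d':ℤ))) - ((q:ℤ)^2-1)) * (m:ℤ) = -(((c:ℤ)+(c':ℤ)+1)*(q:ℤ)^2) := by
    rcases mul_eq_zero.mp key2 with h | h
    · exact absurd h hQ0
    · linarith
  have hdvd2 : (q:ℤ)^2 ∣ ((((d:ℤ)+(d':ℤ))) - ((q:ℤ)^2-1)) := by
    have h : (q:ℤ)^2 ∣ ((((d:ℤ)+(d':ℤ))) - ((q:ℤ)^2-1)) * (m:ℤ) :=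
      ⟨-(((c:ℤ)+(c':ℤ)+1)), by linarith [key3]⟩
    exact (copQM.pow_left).dvd_of_dvd_mul_right h
  have hDz : ((((d:ℤ)+(d':ℤ))) - ((q:ℤ)^2-1)) = 0 := by
    refine Int.eq_zero_of_abs_lt_dvd hdvd2 ?_
    rw [abs_lt]; constructor <;> nlinarith
  have hfin : ((c:ℤ)+(c':ℤ)+1)*(q:ℤ)^2 = 0 := by
    rw [hDz] at key3; simpa using key3.symm
  have hc0 : (0:ℤ) ≤ (c:ℤ) := Int.natCast_nonneg c
  have hc0' : (0:ℤ) ≤ (c':ℤ) := Int.natCast_nonneg c'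
  have hq0z : (0:ℤ) < (q:ℤ) := by linarith
  have hsq : (0:ℤ) < (q:ℤ)^2 := pow_pos hq0z 2
  nlinarith

variable {q n m : ℕ} {S : AddSubmonoid ℕ}

lemma nonmem_res (hS : S = AddSubmonoid.closure {q ^ 3, m * q, q ^ n + 1})
    (hm : m * (q + 1) = q ^ n + 1) (hn : 3 ≤ n) (hq2 : 2 ≤ q)
    {x : ℕ} (hx : x ∉ S) :
    ∃ d e j, d < q^2 ∧ e < q ∧ 1 ≤ j ∧ x + j*q^3 = d*(m*q) + e*(m*q+m) := by
  obtain ⟨d, e, hd, he, hcong⟩ := exist_res hm hn hq2 x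
  have hxB : x < d*(m*q) + e*(m*q+m) := by
    by_contra h
    push_neg at h
    obtain ⟨j, hj⟩ := (Nat.modEq_iff_dvd' h).mp hcong.symm
    have h2 : x = q^3*j + (d*(m*q) + e*(m*q+m)) := (Nat.sub_eq_iff_eq_add h).mp hj
    have h3 : x = j*q^3 + d*(m*q) + e*(m*q+m) := by rw [h2]; ring
    exact hx (h3 ▸ mem_of_rep hS hm j d e)
  obtain ⟨j, hj⟩ := (Nat.modEq_iff_dvd' (le_of_lt hxB)).mp hcong
  have hj1 : 1 ≤ j := by
    rcases Nat.eq_zero_or_pos j with h | h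
    · subst h; simp at hj; omega
    · exact h
  have h2 : d*(m*q) + e*(m*q+m) = q^3*j + x := (Nat.sub_eq_iff_eq_add (le_of_lt hxB)).mp hj
  exact ⟨d, e, j, hd, he, hj1, by rw [h2]; ring⟩

lemma cond_mem (hS : S = AddSubmonoid.closure {q ^ 3, m * q, q ^ n + 1})
    (hm : m * (q + 1) = q ^ n + 1) (hn : 3 ≤ n) (hq2 : 2 ≤ q)
    (F : ℕ) (hF : F + q^3 = (q^2-1)*(m*q) + (q-1)*(m*q+m)) :
    ∀ x, F < x → x ∈ S := by
  intro x hFx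
  by_contra hx
  obtain ⟨d, e, j, hd, he, hj, hBx⟩ := nonmem_res hS hm hn hq2 hx
  have h1 : d*(m*q) ≤ (q^2-1)*(m*q) := Nat.mul_le_mul_right _ (by omega)
  have h2 : e*(m*q+m) ≤ (q-1)*(m*q+m) := Nat.mul_le_mul_right _ (by omega)
  have h3 : q^3 ≤ j*q^3 := Nat.le_mul_of_pos_left _ (by omega)
  omega

lemma sym_mp (hS : S = AddSubmonoid.closure {q ^ 3, m * q, q ^ n + 1})
    (hm : m * (q + 1) = q ^ n + 1) (hn : 3 ≤ n) (hq2 : 2 ≤ q)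
    (F : ℕ) (hF : F + q^3 = (q^2-1)*(m*q) + (q-1)*(m*q+m)) :
    ∀ x ≤ F, x ∈ S → (F - x) ∉ S := by
  intro x hxF hx hx'
  obtain ⟨c, d, e, hd, he, hrep⟩ := (mem_iff hS hm hq2 x).mp hx
  obtain ⟨c', d', e', hd', he', hrep'⟩ := (mem_iff hS hm hq2 (F-x)).mp hx'
  have hsum : x + (F - x) = F := by omega
  have heq : (c+c'+1)*q^3 + (d+d')*(m*q) + (e+e')*(m*q+m)
      = (q^2-1)*(m*q) + (q-1)*(m*q+m) := by
    rw [← hF, ← hsum, hrep', hrep]; ring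
  exact sym_aux hm hn hq2 hd he hd' he' heq

lemma sym_mpr (hS : S = AddSubmonoid.closure {q ^ 3, m * q, q ^ n + 1})
    (hm : m * (q + 1) = q ^ n + 1) (hn : 3 ≤ n) (hq2 : 2 ≤ q)
    (F : ℕ) (hF : F + q^3 = (q^2-1)*(m*q) + (q-1)*(m*q+m)) :
    ∀ x ≤ F, x ∉ S → (F - x) ∈ S := by
  intro x hxF hx
  obtain ⟨d, e, j, hd, he, hj, hBx⟩ := nonmem_res hS hm hn hq2 hx
  have h1q : 1 ≤ q := by omega
  have h1q2 : 1 ≤ q^2 := Nat.one_le_pow 2 q (by omega)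
  have hd1 : d ≤ q^2 - 1 := by omega
  have he1 : e ≤ q - 1 := by omega
  have hgoal : F - x = (j-1)*q^3 + (q^2-1-d)*(m*q) + (q-1-e)*(m*q+m) := by
    zify [hxF, hd1, he1, hj, h1q, h1q2] at hF hBx ⊢
    linear_combination hF - hBx
  rw [hgoal]
  exact mem_of_rep hS hm _ _ _

lemma mem_cab (hS : S = AddSubmonoid.closure {q ^ 3, m * q, q ^ n + 1})
    (hm : m * (q + 1) = q ^ n + 1) {c a b : ℕ} (hba : b ≤ a) :
    c*q^3 + m*(a*q+b) ∈ S := by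
  obtain ⟨t, rfl⟩ := Nat.exists_eq_add_of_le hba
  have h : c*q^3 + m*((b+t)*q+b) = c*q^3 + t*(m*q) + b*(m*q+m) := by ring
  rw [h]
  exact mem_of_rep hS hm c t b

lemma small_rep (hS : S = AddSubmonoid.closure {q ^ 3, m * q, q ^ n + 1})
    (hm : m * (q + 1) = q ^ n + 1) (hn : 3 ≤ n) (hq2 : 2 ≤ q)
    {u : ℕ} (hu : u ∈ S) (hw : u < (q^2-1)*m) :
    ∃ c a b, b ≤ a ∧ a ≤ q-1 ∧ u = c*q^3 + m*(a*q+b) := by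
  obtain ⟨c, d, e, hd, he, hrep⟩ := (mem_iff hS hm hq2 u).mp hu
  have hm0 : 0 < m := by
    rcases Nat.eq_zero_or_pos m with h | h
    · exfalso; rw [h] at hm; simp at hm
    · exact h
  refine ⟨c, d+e, e, by omega, ?_, by rw [hrep]; ring⟩
  have h1 : m*((d+e)*q+e) ≤ u := by
    have : u = c*q^3 + m*((d+e)*q+e) := by rw [hrep]; ring
    omega
  have h2 : m*((d+e)*q+e) < m*(q^2-1) := by
    have : (q^2-1)*m = m*(q^2-1) := by ring
    omega
  have h3 : (d+e)*q+e < q^2-1 := lt_of_mul_lt_mul_left h2 (Nat.zero_le m)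
  have hq2eq : q^2 = q*q := by ring
  have h5 : d+e < q := by
    by_contra hcon
    push_neg at hcon
    have : q*q ≤ (d+e)*q := Nat.mul_le_mul_right q hcon
    omega
  omega

lemma gapAt (hS : S = AddSubmonoid.closure {q ^ 3, m * q, q ^ n + 1})
    (hm : m * (q + 1) = q ^ n + 1) (hn : 3 ≤ n) (hq2 : 2 ≤ q)
    {u c a b : ℕ} (hba : b ≤ a) (haq : a ≤ q-1)
    (hu : u = c*q^3 + m*(a*q+b)) (hw : u < (q^2-1)*m) (hbu : b+1 ≤ u) :
    (u - (b+1)) ∉ S := by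
  intro hv
  have hvw : u - (b+1) < (q^2-1)*m := by omega
  obtain ⟨c', a', b', hba', haq', hrep'⟩ := small_rep hS hm hn hq2 hv hvw
  have hueq : c*q^3 + m*(a*q+b) = c'*q^3 + m*(a'*q+b') + (b+1) := by omega
  -- move to ℤ
  have hz : (c:ℤ)*(q:ℤ)^3 + (m:ℤ)*((a:ℤ)*(q:ℤ)+(b:ℤ))
      = (c':ℤ)*(q:ℤ)^3 + (m:ℤ)*((a':ℤ)*(q:ℤ)+(b':ℤ)) + ((b:ℤ)+1) := by
    exact_mod_cast hueq
  have hmz : (m:ℤ) * ((q:ℤ) + 1) = (q:ℤ)^n + 1 := by exact_mod_cast hm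
  have hQn3 : (q:ℤ)^n = (q:ℤ)^3*(q:ℤ)^(n-3) := by rw [← pow_add]; congr 1; omega
  set L : ℤ := (a:ℤ)*(q:ℤ)+(b:ℤ) with hL
  set L' : ℤ := (a':ℤ)*(q:ℤ)+(b':ℤ) with hL'
  have key : L - (L' + ((b:ℤ)+1)*((q:ℤ)+1))
      = (q:ℤ)^3 * (((q:ℤ)+1)*((c':ℤ)-(c:ℤ)) + (q:ℤ)^(n-3)*(L'-L)) := by
    rw [hL, hL']
    linear_combination ((q:ℤ)+1)*hz - (((a:ℤ)*(q:ℤ)+(b:ℤ)) - ((a':ℤ)*(q:ℤ)+(b':ℤ)))*hmz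
      - (((a:ℤ)*(q:ℤ)+(b:ℤ)) - ((a':ℤ)*(q:ℤ)+(b':ℤ)))*hQn3
  have hQ2 : (2:ℤ) ≤ (q:ℤ) := by exact_mod_cast hq2
  have haz : (a:ℤ) ≤ (q:ℤ)-1 := by
    have : (a:ℤ) < (q:ℤ) := by exact_mod_cast (show a < q by omega)
    omega
  have haz' : (a':ℤ) ≤ (q:ℤ)-1 := by
    have : (a':ℤ) < (q:ℤ) := by exact_mod_cast (show a' < q by omega)
    omega
  have hbz : (b:ℤ) ≤ (a:ℤ) := by exact_mod_cast hba
  have hbz' : (b':ℤ) ≤ (a':ℤ) := by exact_mod_cast hba'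
  have hb0 : (0:ℤ) ≤ (b:ℤ) := Int.natCast_nonneg b
  have hb0' : (0:ℤ) ≤ (b':ℤ) := Int.natCast_nonneg b'
  have ha0 : (0:ℤ) ≤ (a:ℤ) := Int.natCast_nonneg a
  have ha0' : (0:ℤ) ≤ (a':ℤ) := Int.natCast_nonneg a'
  have hqq : (0:ℤ) ≤ (q:ℤ) := by linarith
  have hba_q : (b:ℤ)*(q:ℤ) ≤ (a:ℤ)*(q:ℤ) := mul_le_mul_of_nonneg_right hbz hqq
  have ha_q : (a:ℤ)*(q:ℤ) ≤ ((q:ℤ)-1)*(q:ℤ) := mul_le_mul_of_nonneg_right haz hqq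
  have ha'_q : (a':ℤ)*(q:ℤ) ≤ ((q:ℤ)-1)*(q:ℤ) := mul_le_mul_of_nonneg_right haz' hqq
  have ha'_q0 : (0:ℤ) ≤ (a':ℤ)*(q:ℤ) := mul_nonneg ha0' hqq
  have hb_q0 : (0:ℤ) ≤ (b:ℤ)*(q:ℤ) := mul_nonneg hb0 hqq
  have hcube : 2*(q:ℤ)^2 ≤ (q:ℤ)^3 := by nlinarith
  have hsq : 2*(q:ℤ) ≤ (q:ℤ)^2 := by nlinarith
  have habs : |L - (L' + ((b:ℤ)+1)*((q:ℤ)+1))| < (q:ℤ)^3 := by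
    rw [hL, hL', abs_lt]
    constructor
    · linarith
    · linarith
  have hLR : L - (L' + ((b:ℤ)+1)*((q:ℤ)+1)) = 0 :=
    Int.eq_zero_of_abs_lt_dvd (Dvd.intro _ key.symm) habs
  have heqn : a*q+b = a'*q+b' + (b+1)*(q+1) := by
    have h := sub_eq_zero.mp hLR
    rw [hL, hL'] at h
    exact_mod_cast h
  -- now derive contradiction in ℕ
  have heqn' : a*q + b = (a'+b+1)*q + (b'+b+1) := by rw [heqn]; ring
  have hmodL : (a*q+b) % q = b := by
    rw [add_comm, Nat.add_mul_mod_self_right]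
    exact Nat.mod_eq_of_lt (by omega)
  have hmodR : ((a'+b+1)*q + (b'+b+1)) % q = (b'+b+1) % q := by
    rw [add_comm, Nat.add_mul_mod_self_right]
  have hmod : (b'+b+1) % q = b := by rw [← hmodR, ← heqn', hmodL]
  have hdvd : q ∣ b'+1 := by
    have h1 : (b'+b+1) ≡ b [MOD q] := by
      show _ % _ = _ % _
      rw [hmod, Nat.mod_eq_of_lt (by omega)]
    have h2 := (Nat.modEq_iff_dvd' (by omega : b ≤ b'+b+1)).mp h1.symm
    have h3 : b'+b+1-b = b'+1 := by omega
    rwa [h3] at h2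
  have hb'q : b'+1 = q := by
    have := Nat.le_of_dvd (by omega) hdvd
    omega
  have ha'q : a' = q-1 := by omega
  rw [ha'q] at heqn'
  have hsub : ((q-1)+b+1)*q = (q-1)*q + b*q + q := by ring
  rw [hsub] at heqn'
  have hNat : a*q ≤ (q-1)*q := Nat.mul_le_mul_right q haq
  have hbq0 : 0 ≤ b*q := Nat.zero_le _
  linarith [heqn', hNat, hb'q, hbq0]

variable {S : AddSubmonoid ℕ}

noncomputable def Afin (S : AddSubmonoid ℕ) (y : ℕ) : Finset ℕ :=
  (range (y+1)).filter (fun a => a ∈ S ∧ y - a ∈ S)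

noncomputable def Nfin (S : AddSubmonoid ℕ) (F t : ℕ) : Finset ℕ :=
  (range (F+1)).filter (fun x => x ∈ S ∧ x + t ∉ S)

lemma nu_eq (ν : ℕ → ℕ)
    (hν : ∀ x, ν x = {p : ℕ × ℕ | p.1 ∈ S ∧ p.2 ∈ S ∧ p.1 + p.2 = x}.ncard) (y : ℕ) :
    ν y = (Afin S y).card := by
  rw [hν]
  have hinj : Function.Injective (fun a : ℕ => (a, y - a)) := by
    intro a b h
    simpa using congrArg Prod.fst h
  have hset : {p : ℕ × ℕ | p.1 ∈ S ∧ p.2 ∈ S ∧ p.1 + p.2 = y}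
      = (fun a : ℕ => (a, y - a)) '' (Afin S y : Set ℕ) := by
    ext p
    simp only [Set.mem_setOf_eq, Set.mem_image, Finset.mem_coe, Afin, mem_filter, mem_range]
    constructor
    · rintro ⟨h1, h2, h3⟩
      refine ⟨p.1, ⟨by omega, h1, by rw [show y - p.1 = p.2 by omega]; exact h2⟩, ?_⟩
      rw [show y - p.1 = p.2 by omega]
    · rintro ⟨a, ⟨ha, h1, h2⟩, rfl⟩
      exact ⟨h1, h2, by omega⟩
  rw [hset, Set.ncard_image_of_injective _ hinj, Set.ncard_coe_finset]

lemma nu2 (F t : ℕ) (ht : 1 ≤ t)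
    (hcond : ∀ x, F < x → x ∈ S)
    (hsym : ∀ x ≤ F, (x ∈ S ↔ (F - x) ∉ S)) :
    (Afin S (F+t)).card = t + (Nfin S F t).card := by
  have hnn : ∀ x : ℕ, x ≤ F → x ∉ S → (F - x) ∈ S := by
    intro x hx hxn
    by_contra h
    exact hxn ((hsym x hx).mpr h)
  have hsplit : range (F+t+1) = range t ∪ Ico t (F+t+1) := by
    rw [range_eq_Ico, range_eq_Ico]
    exact (Finset.Ico_union_Ico_eq_Ico (a := 0) (b := t) (c := F+t+1) (by omega) (by omega)).symm
  have hdisj : Disjoint (range t) (Ico t (F+t+1)) := by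
    rw [Finset.disjoint_left]
    intro a ha hb
    simp only [mem_range] at ha
    simp only [mem_Ico] at hb
    omega
  have hXY : (Afin S (F+t)).card
      = ((range t).filter (· ∈ S)).card
        + ((range (F+1)).filter (fun x => x ∉ S ∧ x + t ∈ S)).card := by
    have h0 : Afin S (F+t)
        = (range t).filter (fun a => a ∈ S ∧ F+t-a ∈ S)
          ∪ (Ico t (F+t+1)).filter (fun a => a ∈ S ∧ F+t-a ∈ S) := by
      rw [Afin, show F+t+1 = F+t+1 from rfl, hsplit, filter_union]
    have h1 : (range t).filter (fun a => a ∈ S ∧ F+t-a ∈ S) = (range t).filter (· ∈ S) := by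
      apply filter_congr
      intro a ha
      simp only [mem_range] at ha
      constructor
      · exact fun h => h.1
      · intro h
        exact ⟨h, hcond _ (by omega)⟩
    have h2 : (Ico t (F+t+1)).filter (fun a => a ∈ S ∧ F+t-a ∈ S)
        = ((range (F+1)).filter (fun x => x ∉ S ∧ x + t ∈ S)).image (· + t) := by
      ext a
      simp only [mem_filter, mem_Ico, mem_image, mem_range]
      constructor
      · rintro ⟨⟨hta, haFt⟩, haS, hFta⟩
        refine ⟨a - t, ⟨by omega, ?_, by rw [show a-t+t = a by omega]; exact haS⟩, by omega⟩
        have hle : F+t-a ≤ F := by omega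
        have := (hsym (F+t-a) hle).mp hFta
        rwa [show F - (F+t-a) = a - t by omega] at this
      · rintro ⟨x, ⟨hxF, hxnS, hxtS⟩, rfl⟩
        refine ⟨⟨by omega, by omega⟩, hxtS, ?_⟩
        rw [show F+t-(x+t) = F - x by omega]
        exact hnn x (by omega) hxnS
    rw [h0, card_union_of_disjoint (disjoint_filter_filter hdisj), h1, h2,
      card_image_of_injective _ (add_left_injective t)]
  have hT : ((range t).filter (· ∈ S)).card + ((range t).filter (fun x => x ∉ S)).card = t := by
    have h := card_filter_add_card_filter_not (s := range t) (p := (· ∈ S))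
    rw [card_range] at h
    convert h using 3
  have hYZ : ((range (F+1)).filter (fun x => x ∉ S ∧ x + t ∈ S)).card
      + ((range (F+1)).filter (fun x => x ∉ S ∧ ¬ (x + t ∈ S))).card
      = ((range (F+1)).filter (fun x => x ∉ S)).card := by
    rw [← filter_filter, ← filter_filter]
    exact card_filter_add_card_filter_not (p := fun x => x + t ∈ S)
  have hNZ : ((range (F+1)).filter (fun x => x + t ∉ S ∧ x ∈ S)).card
      + ((range (F+1)).filter (fun x => x + t ∉ S ∧ ¬ (x ∈ S))).card
      = ((range (F+1)).filter (fun x => x + t ∉ S)).card := by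
    rw [← filter_filter, ← filter_filter]
    exact card_filter_add_card_filter_not (p := fun x => x ∈ S)
  have hN : ((range (F+1)).filter (fun x => x + t ∉ S ∧ x ∈ S)).card = (Nfin S F t).card := by
    rw [Nfin]
    congr 1
    apply filter_congr
    intro x _
    tauto
  have hZZ : ((range (F+1)).filter (fun x => x ∉ S ∧ ¬ (x + t ∈ S)))
      = ((range (F+1)).filter (fun x => x + t ∉ S ∧ ¬ (x ∈ S))) := by
    apply filter_congr
    intro x _
    tauto
  have hGW : ((range (F+1)).filter (fun x => x ∉ S)).card
      = ((range t).filter (fun x => x ∉ S)).card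
        + ((range (F+1)).filter (fun x => x + t ∉ S)).card := by
    have hG' : (range (F+t+1)).filter (fun x => x ∉ S) = (range (F+1)).filter (fun x => x ∉ S) := by
      ext x
      simp only [mem_filter, mem_range]
      constructor
      · rintro ⟨hx, hxn⟩
        refine ⟨?_, hxn⟩
        by_contra h
        exact hxn (hcond x (by omega))
      · rintro ⟨hx, hxn⟩
        exact ⟨by omega, hxn⟩
    have hg2 : (range (F+t+1)).filter (fun x => x ∉ S)
        = (range t).filter (fun x => x ∉ S) ∪ (Ico t (F+t+1)).filter (fun x => x ∉ S) := by
      rw [hsplit, filter_union]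
    have him : (Ico t (F+t+1)).filter (fun x => x ∉ S)
        = ((range (F+1)).filter (fun x => x + t ∉ S)).image (· + t) := by
      ext y
      simp only [mem_filter, mem_Ico, mem_image, mem_range]
      constructor
      · rintro ⟨⟨hty, hyF⟩, hyn⟩
        exact ⟨y - t, ⟨by omega, by rw [show y-t+t = y by omega]; exact hyn⟩, by omega⟩
      · rintro ⟨x, ⟨hxF, hxn⟩, rfl⟩
        exact ⟨⟨by omega, by omega⟩, hxn⟩
    rw [← hG', hg2, card_union_of_disjoint (disjoint_filter_filter hdisj), him,
      card_image_of_injective _ (add_left_injective t)]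
  rw [hXY, ← hN]
  rw [hZZ] at hYZ
  omega

lemma scard (F g : ℕ) (hF1 : F + 1 = 2*g)
    (hsym : ∀ x ≤ F, (x ∈ S ↔ (F - x) ∉ S)) :
    ((range (F+1)).filter (· ∈ S)).card = g := by
  have hbij : ((range (F+1)).filter (· ∈ S)).card = ((range (F+1)).filter (· ∉ S)).card := by
    apply Finset.card_bij (fun x _ => F - x)
    · intro a ha
      simp only [mem_filter, mem_range] at ha ⊢
      exact ⟨by omega, (hsym a (by omega)).mp ha.2⟩
    · intro a1 h1 a2 h2 h
      simp only [mem_filter, mem_range] at h1 h2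
      omega
    · intro b hb
      simp only [mem_filter, mem_range] at hb
      refine ⟨F - b, ?_, by omega⟩
      simp only [mem_filter, mem_range]
      refine ⟨by omega, ?_⟩
      apply (hsym (F-b) (by omega)).mpr
      rw [show F - (F - b) = b by omega]
      exact hb.2
  have htot := card_filter_add_card_filter_not (s := range (F+1)) (p := (· ∈ S))
  rw [card_range] at htot
  omega

end Stmt17

/-- The order bound for large elements of the semigroup `S = ⟨q³, mq, qⁿ+1⟩`:
for `ℓ` in the stated range, `d_ORD(C_ℓ(P_∞)) = min{z ∈ S : z ≥ ℓ + 1 - g}`. -/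
theorem stmt_17 (q n m g : ℕ) (hq : IsPrimePow q) (hq2 : 2 ≤ q) (hn : 3 ≤ n)
    (hodd : Odd n) (hm : m * (q + 1) = q ^ n + 1)
    (hg : 2 * g = (q - 1) * (q ^ (n + 1) + q ^ n - q ^ 2))
    (S : AddSubmonoid ℕ)
    (hS : S = AddSubmonoid.closure {q ^ 3, m * q, q ^ n + 1})
    (ν : ℕ → ℕ)
    (hν : ∀ x, ν x = {p : ℕ × ℕ | p.1 ∈ S ∧ p.2 ∈ S ∧ p.1 + p.2 = x}.ncard)
    (ρ : ℕ → ℕ) (hρ : ∀ t : ℕ, ρ (t + 1) = Nat.nth (· ∈ S) t)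
    (ℓ : ℕ)
    (hl1 : (3 : ℚ) / 2 * ((q : ℚ) - 1)
        * ((q : ℚ) ^ (n + 1) + (q : ℚ) ^ n / 3 - (q : ℚ) ^ 2 - 2 / 3) - 2 < (ℓ : ℚ))
    (hl2 : (ℓ : ℚ) ≤ (3 : ℚ) / 2 * ((q : ℚ) - 1)
        * ((q : ℚ) ^ (n + 1) + (q : ℚ) ^ n - (q : ℚ) ^ 2) - 2) :
    sInf (ν '' {y : ℕ | y ∈ S ∧ ρ (ℓ + 1) ≤ y})
      = sInf {z : ℕ | z ∈ S ∧ ℓ + 1 - g ≤ z} := by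
  -- ### arithmetic preliminaries
  have h1q : 1 ≤ q := by omega
  have h1q2 : 1 ≤ q^2 := Nat.one_le_pow 2 q (by omega)
  have hq2q : 2*q ≤ q^2 := by nlinarith
  have hps4 : 2*q^2 ≤ q^3 := by nlinarith
  have hps2 : 2*q^n ≤ q^(n+1) := by
    have h := Nat.mul_le_mul_left (q^n) hq2
    have h2 : q^(n+1) = q^n*q := pow_succ q n
    linarith
  have hp21 : q^2 ≤ q^n := Nat.pow_le_pow_right h1q (by omega)
  have hp31 : q^3 ≤ q^n := Nat.pow_le_pow_right h1q (by omega)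
  have hpn1 : q^2 + 12 ≤ q^(n+1) := by linarith
  have hmge : q^2 - q + 1 ≤ m := by
    have h1 : (q^2 - q + 1) * (q + 1) = q^3 + 1 := by
      zify [show q ≤ q^2 by linarith]; ring
    have h3 : (q^2-q+1)*(q+1) ≤ m*(q+1) := by rw [h1, hm]; omega
    exact Nat.le_of_mul_le_mul_right h3 (by omega)
  have hm3 : 3 ≤ m := by omega
  have hm0 : 0 < m := by omega
  have hg1 : 1 ≤ g := by
    have h1 : 1*(q^2+2) ≤ (q-1)*(q^(n+1)+q^n-q^2) := Nat.mul_le_mul (by omega) (by omega)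
    omega
  -- ℤ and ℚ versions of hypotheses
  have hsub1 : q^2 ≤ q^(n+1) + q^n := by omega
  have hsubK : q^2 + 1 ≤ q^(n+1) := by omega
  have hgz : (2:ℤ)*(g:ℤ) = ((q:ℤ)-1)*((q:ℤ)^(n+1)+(q:ℤ)^n-(q:ℤ)^2) := by
    have h := hg
    zify [h1q, hsub1] at h
    exact_mod_cast h
  have hgq : (2:ℚ)*(g:ℚ) = ((q:ℚ)-1)*((q:ℚ)^(n+1)+(q:ℚ)^n-(q:ℚ)^2) := by
    have h := hg
    qify [h1q, hsub1] at h
    exact_mod_cast h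
  have hmz : (m:ℤ)*((q:ℤ)+1) = (q:ℤ)^n+1 := by exact_mod_cast hm
  have hpsz : ((q:ℤ))^(n+1) = (q:ℤ)^n * (q:ℤ) := by exact_mod_cast pow_succ q n
  -- the Frobenius number F
  obtain ⟨F, hF1⟩ : ∃ F, F + 1 = 2*g := ⟨2*g-1, by omega⟩
  have Fid : F + q^3 = (q^2-1)*(m*q) + (q-1)*(m*q+m) := by
    zify [h1q, h1q2]
    have hFz : (F:ℤ) + 1 = 2*(g:ℤ) := by exact_mod_cast hF1
    linear_combination hFz + hgz + (1-(q:ℤ)^2)*hmz + ((q:ℤ)-1)*hpsz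
  -- K₀
  obtain ⟨K, hKZ⟩ : ∃ K : ℕ, (K:ℤ) = ((q:ℤ)-1)*((q:ℤ)^(n+1)-(q:ℤ)^2-1) :=
    ⟨(q-1)*(q^(n+1)-q^2-1), by
      zify [h1q, show q^2 ≤ q^(n+1) by omega, show 1 ≤ q^(n+1)-q^2 by omega]⟩
  have hKQ : (K:ℚ) = ((q:ℚ)-1)*((q:ℚ)^(n+1)-(q:ℚ)^2-1) := by
    have h2 := congrArg (fun z : ℤ => (z:ℚ)) hKZ
    push_cast at h2
    exact_mod_cast h2
  have hK : K + (q^2-1)*m = 2*g := by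
    zify [h1q2]
    linear_combination hKZ + ((q:ℤ)-1)*hmz - hgz
  have hK2 : 2 ≤ K := by
    have hz1 : ((q:ℤ))^2 + 12 ≤ (q:ℤ)^(n+1) := by exact_mod_cast hpn1
    have hz2 : (2:ℤ) ≤ (q:ℤ) := by exact_mod_cast hq2
    have : (2:ℤ) ≤ (K:ℤ) := by nlinarith [hKZ]
    exact_mod_cast this
  -- bounds on ℓ
  have hk1 : K + g ≤ ℓ + 1 := by
    have hc : ((2*K+2*g : ℕ):ℚ) < 2*(ℓ:ℚ)+4 := by
      push_cast
      linarith [hl1, hgq, hKQ]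
    have : 2*K+2*g < 2*ℓ+4 := by exact_mod_cast hc
    omega
  have hup : ℓ + 2 ≤ 3*g := by
    have hc : ((ℓ:ℚ)) + 2 ≤ 3*(g:ℚ) := by linarith [hl2, hgq]
    exact_mod_cast hc
  have hgl : g + 1 ≤ ℓ := by omega
  -- k
  set k := ℓ + 1 - g with hkdef
  have hkg : k + g = ℓ + 1 := by omega
  have hkK : K ≤ k := by omega
  have hkF : k ≤ F := by omega
  -- symmetry and conductor
  have hsymm : ∀ x ≤ F, (x ∈ S ↔ (F - x) ∉ S) := by
    intro x hx
    constructor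
    · exact fun h => Stmt17.sym_mp hS hm hn hq2 F Fid x hx h
    · intro h
      by_contra h'
      exact h (Stmt17.sym_mpr hS hm hn hq2 F Fid x hx h')
  have hcond : ∀ x, F < x → x ∈ S := Stmt17.cond_mem hS hm hn hq2 F Fid
  have hnn : ∀ x ≤ F, x ∉ S → (F - x) ∈ S := fun x hx h => by
    by_contra h2
    exact h ((hsymm x hx).mpr h2)
  -- the ρ value
  have hcount : Nat.count (· ∈ S) (ℓ+g) = ℓ := by
    rw [Nat.count_eq_card_filter_range]
    have hsplit : range (ℓ+g) = range (F+1) ∪ Ico (F+1) (ℓ+g) := by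
      rw [range_eq_Ico, range_eq_Ico]
      exact (Finset.Ico_union_Ico_eq_Ico (a := 0) (b := F+1) (c := ℓ+g) (by omega) (by omega)).symm
    have hdisj : Disjoint (range (F+1)) (Ico (F+1) (ℓ+g)) := by
      rw [Finset.disjoint_left]
      intro a ha hb
      simp only [mem_range] at ha
      simp only [mem_Ico] at hb
      omega
    rw [hsplit, filter_union, card_union_of_disjoint (Finset.disjoint_filter_filter hdisj)]
    have h1 : ((range (F+1)).filter (· ∈ S)).card = g := Stmt17.scard F g hF1 hsymm
    have h2 : (Ico (F+1) (ℓ+g)).filter (· ∈ S) = Ico (F+1) (ℓ+g) := by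
      apply Finset.filter_eq_self.mpr
      intro x hx
      simp only [mem_Ico] at hx
      exact hcond x (by omega)
    rw [h1, h2, Nat.card_Ico]
    omega
  have hnth : Nat.nth (· ∈ S) ℓ = ℓ + g := by
    have hmem : (ℓ+g) ∈ S := hcond _ (by omega)
    have h := Nat.nth_count (p := (· ∈ S)) hmem
    rwa [hcount] at h
  have hρval : ρ (ℓ + 1) = F + k := by
    rw [hρ ℓ, hnth]; omega
  -- the right-hand sInf
  have hRne : {z : ℕ | z ∈ S ∧ ℓ + 1 - g ≤ z}.Nonempty :=
    ⟨F+1+k, hcond _ (by omega), by omega⟩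
  set z₀ := sInf {z : ℕ | z ∈ S ∧ ℓ + 1 - g ≤ z} with hz₀def
  obtain ⟨hz₀S, hz₀k⟩ := Nat.sInf_mem hRne
  have hz₀F : z₀ ≤ F + 1 := Nat.sInf_le ⟨hcond (F+1) (by omega), by omega⟩
  have hz₀1 : 1 ≤ z₀ := by omega
  -- upper bound: ν (F + z₀) = z₀
  have hNempty : Stmt17.Nfin S F z₀ = ∅ := by
    rw [Stmt17.Nfin]
    apply Finset.filter_false_of_mem
    rintro x - ⟨h1, h2⟩
    exact h2 (S.add_mem h1 hz₀S)
  have hy0 : ν (F + z₀) = z₀ := by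
    rw [Stmt17.nu_eq ν hν, Stmt17.nu2 F z₀ hz₀1 hcond hsymm, hNempty]
    simp
  have hmemA : z₀ ∈ ν '' {y : ℕ | y ∈ S ∧ ρ (ℓ + 1) ≤ y} := by
    refine ⟨F + z₀, ⟨hcond _ (by omega), by rw [hρval]; omega⟩, hy0⟩
  -- lower bound
  have hlow : ∀ w ∈ ν '' {y : ℕ | y ∈ S ∧ ρ (ℓ + 1) ≤ y}, z₀ ≤ w := by
    rintro w ⟨y, ⟨hyS, hyρ⟩, rfl⟩
    rw [hρval] at hyρ
    set t := y - F with htdef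
    have hyt : y = F + t := by omega
    have htk : k ≤ t := by omega
    have ht1 : 1 ≤ t := by omega
    rw [Stmt17.nu_eq ν hν, hyt, Stmt17.nu2 F t ht1 hcond hsymm]
    by_cases hzt : z₀ ≤ t
    · omega
    push_neg at hzt
    have htS : t ∉ S := by
      intro h
      have := Nat.sInf_le (show t ∈ {z : ℕ | z ∈ S ∧ ℓ + 1 - g ≤ z} from ⟨h, by omega⟩)
      omega
    have htF : t ≤ F := by omega
    have huS : (F - t) ∈ S := hnn t htF htS
    have huw : F - t < (q^2-1)*m := by omega
    obtain ⟨c, a, b, hba, haq, hurep⟩ := Stmt17.small_rep hS hm hn hq2 huS huw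
    have hbq : b ≤ q - 1 := le_trans hba haq
    -- z₀ ≤ t + b + 1
    have hzb : z₀ ≤ t + b + 1 := by
      by_cases hub : b + 1 ≤ F - t
      · have hgap := Stmt17.gapAt hS hm hn hq2 hba haq hurep huw hub
        have hle : F - t - (b+1) ≤ F := by omega
        have hmem : F - (F - t - (b+1)) ∈ S := hnn _ hle hgap
        have hFx : F - (F - t - (b+1)) = t + b + 1 := by omega
        rw [hFx] at hmem
        exact Nat.sInf_le ⟨hmem, by omega⟩
      · push_neg at hub
        have hb0 : b = 0 := by
          by_contra hb
          have h1 : m*(a*q+b) ≤ F - t := by omega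
          have h2 : m*b ≤ m*(a*q+b) := Nat.mul_le_mul_left m (by omega)
          have h3 : 3*b ≤ m*b := Nat.mul_le_mul_right b hm3
          omega
        have hmem : F+1 ∈ S := hcond _ (by omega)
        have htF' : t + b + 1 = F + 1 := by
          -- u = 0 so t = F
          have h1 : m*(a*q+b) ≤ F - t := by omega
          omega
        rw [← htF'] at hmem
        exact Nat.sInf_le ⟨hmem, by omega⟩
    -- b + 1 ≤ card of Nfin
    have hcnt : b + 1 ≤ (Stmt17.Nfin S F t).card := by
      have hufi : ∀ i ≤ b, m*((a-b+i)*q + i) + (c*q^3 + m*((b-i)*q+(b-i))) = F - t := by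
        intro i hi
        obtain ⟨e, he⟩ : ∃ e, a = b + e := ⟨a-b, by omega⟩
        obtain ⟨fd, hfd⟩ : ∃ fd, b = i + fd := ⟨b-i, by omega⟩
        have h1 : a-b+i = e+i := by omega
        have h2 : b-i = fd := by omega
        rw [hurep, h1, h2, he, hfd]
        ring
      have hfS : ∀ i ≤ b, m*((a-b+i)*q + i) ∈ S := by
        intro i hi
        have h := Stmt17.mem_cab hS hm (c := 0) (a := a-b+i) (b := i) (by omega)
        simpa using h
      have hfmem : ∀ i ≤ b, m*((a-b+i)*q + i) ∈ Stmt17.Nfin S F t := by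
        intro i hi
        have hui := hufi i hi
        rw [Stmt17.Nfin, mem_filter, mem_range]
        refine ⟨by omega, hfS i hi, ?_⟩
        intro hcon
        have hle : m*((a-b+i)*q + i) + t ≤ F := by omega
        have h := (hsymm _ hle).mp hcon
        apply h
        have hFfi : F - (m*((a-b+i)*q + i) + t) = c*q^3 + m*((b-i)*q+(b-i)) := by omega
        rw [hFfi]
        exact Stmt17.mem_cab hS hm (le_refl _)
      have himsub : (range (b+1)).image (fun i => m*((a-b+i)*q + i)) ⊆ Stmt17.Nfin S F t := by
        intro x hx
        simp only [mem_image, mem_range] at hx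
        obtain ⟨i, hi, rfl⟩ := hx
        exact hfmem i (by omega)
      have hinj : Set.InjOn (fun i => m*((a-b+i)*q + i)) ↑(range (b+1)) := by
        intro i hi j hj hij
        simp only [coe_range, Set.mem_Iio] at hi hj
        have hij' : m*((a-b+i)*q + i) = m*((a-b+j)*q + j) := hij
        have hfi : ∀ i, m*((a-b+i)*q + i) = m*((a-b)*q) + i*(m*q+m) := by
          intro i; ring
        rw [hfi i, hfi j] at hij'
        have h2 : i*(m*q+m) = j*(m*q+m) := by omega
        exact Nat.eq_of_mul_eq_mul_right (by omega) h2
      have hcard := Finset.card_image_of_injOn hinj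
      have := Finset.card_le_card himsub
      rw [hcard, card_range] at this
      exact this
    omega
  -- conclude
  exact le_antisymm (Nat.sInf_le hmemA) (le_csInf ⟨z₀, hmemA⟩ hlow)
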